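/- For all α, β > 0, we have b(α,β,α) = b(β,α,β) and 4θ_log(α,β) + b(α,β,α) ≥ 2(α+β), where b(α,β,γ) := ∂₁θ_log(β,γ)·α + ∂₂θ_log(β,γ)·β − θ_log(α,β). -/

import Mathlib

open Real MeasureTheory intervalIntegral

lemma hda {f g : ℝ → ℝ} {d e : ℝ} {x : ℝ} (h : HasDerivAt f d x) (hfg : ∀ t, f t = g t)
    (hde : d = e) : HasDerivAt g e x := by
  rw [← hde]
  exact h.congr_of_eventuallyEq (Filter.Eventually.of_forall fun t => (hfg t).symm)

-- helper: nonneg via derivative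
lemma nonneg_of_deriv {f f' : ℝ → ℝ} (hd : ∀ x, HasDerivAt f (f' x) x) (h0 : f 0 = 0)
    (h : ∀ x, 0 ≤ x → 0 ≤ f' x) : ∀ x, 0 ≤ x → 0 ≤ f x := by
  intro x hx
  have hmono : MonotoneOn f (Set.Ici 0) := by
    apply monotoneOn_of_deriv_nonneg (convex_Ici 0)
    · exact (Differentiable.continuous fun y => (hd y).differentiableAt).continuousOn
    · intro y _; exact ((hd y).differentiableAt).differentiableWithinAt
    · intro y hy
      rw [(hd y).deriv]
      exact h y (le_of_lt (by simpa using hy))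
  calc (0:ℝ) = f 0 := h0.symm
  _ ≤ f x := hmono Set.self_mem_Ici hx hx

lemma exp_quad (x : ℝ) (hx : 0 ≤ x) : 1 + x + x^2/2 ≤ exp x := by
  have h1 : ∀ y, 0 ≤ y → 0 ≤ exp y - 1 - y := by
    apply nonneg_of_deriv (f' := fun y => exp y - 1)
    · intro y
      exact hda ((Real.hasDerivAt_exp y).sub ((hasDerivAt_const y (1:ℝ)).add (hasDerivAt_id y)))
        (fun t => by simp only [Pi.add_apply, Pi.sub_apply, Pi.mul_apply, Pi.neg_apply, id_eq]; ring) (by simp)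
    · simp
    · intro y _; have := Real.add_one_le_exp y; linarith
  have h2 : ∀ y, 0 ≤ y → 0 ≤ exp y - 1 - y - y^2/2 := by
    apply nonneg_of_deriv (f' := fun y => exp y - 1 - y)
    · intro y
      exact hda (((Real.hasDerivAt_exp y).sub ((hasDerivAt_const y (1:ℝ)).add
        (hasDerivAt_id y))).sub ((hasDerivAt_pow 2 y).div_const 2))
        (fun t => by simp only [Pi.add_apply, Pi.sub_apply, Pi.mul_apply, Pi.neg_apply, id_eq]; ring) (by norm_num)
    · simp
    · intro y hy; have := h1 y hy; linarith
  have := h2 x hx; linarith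

lemma hasDerivAt_pq (A B C s : ℝ) :
    HasDerivAt (fun s => A*s^2+B*s+C) (2*A*s+B) s := by
  have h := (((hasDerivAt_pow 2 s).const_mul A).add ((hasDerivAt_id s).const_mul B)).add_const C
  exact hda h (fun t => by simp only [Pi.add_apply, Pi.sub_apply, Pi.mul_apply, Pi.neg_apply, id_eq]; try ring) (by push_cast; ring_nf)

lemma hasDerivAt_pqe (A B C s : ℝ) :
    HasDerivAt (fun s => (A*s^2+B*s+C) * exp s) ((A*s^2+(B+2*A)*s+(B+C)) * exp s) s := by
  have h := (hasDerivAt_pq A B C s).mul (Real.hasDerivAt_exp s)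
  exact hda h (fun t => rfl) (by ring)

lemma hasDerivAt_exp_sq (s : ℝ) : HasDerivAt (fun s : ℝ => exp s ^ 2) (2 * exp s ^ 2) s := by
  have h := (Real.hasDerivAt_exp s).pow 2
  exact hda h (fun t => rfl) (by push_cast; ring)

lemma hasDerivAt_exp_neg (s : ℝ) : HasDerivAt (fun s : ℝ => exp (-s)) (-exp (-s)) s := by
  have h := ((hasDerivAt_id s).neg).exp
  exact hda h (fun t => by simp only [Pi.add_apply, Pi.sub_apply, Pi.mul_apply, Pi.neg_apply, id_eq]) (by simp only [Pi.add_apply, Pi.sub_apply, Pi.mul_apply, Pi.neg_apply, id_eq]; ring)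

noncomputable def gg0 (s : ℝ) : ℝ := exp s ^ 2 - (2*s^2-2*s+1) * exp s - (2*s^2+2*s+1) + exp (-s)
noncomputable def gg1 (s : ℝ) : ℝ := 2 * exp s ^ 2 - (2*s^2+2*s-1) * exp s - (4*s+2) - exp (-s)
noncomputable def gg2 (s : ℝ) : ℝ := 4 * exp s ^ 2 - (2*s^2+6*s+1) * exp s - 4 + exp (-s)
noncomputable def gg3 (s : ℝ) : ℝ := 8 * exp s ^ 2 - (2*s^2+10*s+7) * exp s - exp (-s)
noncomputable def gg4 (s : ℝ) : ℝ := 16 * exp s ^ 2 - (2*s^2+14*s+17) * exp s + exp (-s)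
noncomputable def gg5 (s : ℝ) : ℝ := 32 * exp s ^ 2 - (2*s^2+18*s+31) * exp s - exp (-s)
noncomputable def gg6 (s : ℝ) : ℝ := 64 * exp s ^ 2 - (2*s^2+22*s+49) * exp s + exp (-s)

lemma hgg0 (s : ℝ) : HasDerivAt gg0 (gg1 s) s := by
  unfold gg0 gg1
  have h := (((hasDerivAt_exp_sq s).sub (hasDerivAt_pqe 2 (-2) 1 s)).sub
    (hasDerivAt_pq 2 2 1 s)).add (hasDerivAt_exp_neg s)
  exact hda h (fun t => by simp only [Pi.add_apply, Pi.sub_apply, Pi.mul_apply, Pi.neg_apply, id_eq]; ring) (by ring)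

lemma hgg1 (s : ℝ) : HasDerivAt gg1 (gg2 s) s := by
  unfold gg1 gg2
  have h := ((((hasDerivAt_exp_sq s).const_mul 2).sub (hasDerivAt_pqe 2 2 (-1) s)).sub
    (hasDerivAt_pq 0 4 2 s)).sub (hasDerivAt_exp_neg s)
  exact hda h (fun t => by simp only [Pi.add_apply, Pi.sub_apply, Pi.mul_apply, Pi.neg_apply, id_eq]; ring) (by ring)

lemma hgg2 (s : ℝ) : HasDerivAt gg2 (gg3 s) s := by
  unfold gg2 gg3
  have h := ((((hasDerivAt_exp_sq s).const_mul 4).sub (hasDerivAt_pqe 2 6 1 s)).sub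
    (hasDerivAt_const s 4)).add (hasDerivAt_exp_neg s)
  exact hda h (fun t => by simp only [Pi.add_apply, Pi.sub_apply, Pi.mul_apply, Pi.neg_apply, id_eq]) (by ring)

lemma hgg3 (s : ℝ) : HasDerivAt gg3 (gg4 s) s := by
  unfold gg3 gg4
  have h := (((hasDerivAt_exp_sq s).const_mul 8).sub (hasDerivAt_pqe 2 10 7 s)).sub
    (hasDerivAt_exp_neg s)
  exact hda h (fun t => by simp only [Pi.add_apply, Pi.sub_apply, Pi.mul_apply, Pi.neg_apply, id_eq]) (by ring)

lemma hgg4 (s : ℝ) : HasDerivAt gg4 (gg5 s) s := by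
  unfold gg4 gg5
  have h := (((hasDerivAt_exp_sq s).const_mul 16).sub (hasDerivAt_pqe 2 14 17 s)).add
    (hasDerivAt_exp_neg s)
  exact hda h (fun t => by simp only [Pi.add_apply, Pi.sub_apply, Pi.mul_apply, Pi.neg_apply, id_eq]) (by ring)

lemma hgg5 (s : ℝ) : HasDerivAt gg5 (gg6 s) s := by
  unfold gg5 gg6
  have h := (((hasDerivAt_exp_sq s).const_mul 32).sub (hasDerivAt_pqe 2 18 31 s)).sub
    (hasDerivAt_exp_neg s)
  exact hda h (fun t => by simp only [Pi.add_apply, Pi.sub_apply, Pi.mul_apply, Pi.neg_apply, id_eq]) (by ring)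

lemma gg6_nonneg (s : ℝ) (hs : 0 ≤ s) : 0 ≤ gg6 s := by
  unfold gg6
  have h1 : 2*s^2+22*s+49 ≤ 64 * exp s := by
    have := exp_quad s hs
    nlinarith [sq_nonneg s]
  have h2 : (2*s^2+22*s+49) * exp s ≤ 64 * exp s * exp s :=
    mul_le_mul_of_nonneg_right h1 (exp_nonneg s)
  have h3 : (0:ℝ) < exp (-s) := exp_pos _
  nlinarith

lemma gg0_nonneg (s : ℝ) : 0 ≤ gg0 s := by
  have key : ∀ x, 0 ≤ x → 0 ≤ gg0 x := by
    have h5 := nonneg_of_deriv hgg5 (by unfold gg5; norm_num) gg6_nonneg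
    have h4 := nonneg_of_deriv hgg4 (by unfold gg4; norm_num) h5
    have h3 := nonneg_of_deriv hgg3 (by unfold gg3; norm_num) h4
    have h2 := nonneg_of_deriv hgg2 (by unfold gg2; norm_num) h3
    have h1 := nonneg_of_deriv hgg1 (by unfold gg1; norm_num) h2
    exact nonneg_of_deriv hgg0 (by unfold gg0; norm_num) h1
  rcases le_or_gt 0 s with hs | hs
  · exact key s hs
  · have h := key (-s) (by linarith)
    have hrel : gg0 s = exp s * gg0 (-s) := by
      unfold gg0
      rw [neg_neg]
      have h1 : exp s * exp (-s) = 1 := by rw [← Real.exp_add]; simp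
      have h2 : exp (-s) ^ 2 * exp s = exp (-s) := by
        rw [pow_two, mul_assoc, mul_comm (exp (-s)) (exp s), h1, mul_one]
      nlinarith [exp_pos s]
    rw [hrel]
    exact mul_nonneg (exp_nonneg s) h

noncomputable def Ee (c : ℝ) : ℝ := ∫ p in (0:ℝ)..1, exp (p * c)
noncomputable def Ee1 (c : ℝ) : ℝ := ∫ p in (0:ℝ)..1, p * exp (p * c)

lemma Ee_zero : Ee 0 = 1 := by simp [Ee]

lemma Ee1_zero : Ee1 0 = 1/2 := by
  simp only [Ee1, mul_zero, Real.exp_zero, mul_one]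
  rw [integral_id]
  norm_num

lemma Ee_ne {c : ℝ} (hc : c ≠ 0) : Ee c = (exp c - 1) / c := by
  unfold Ee
  rw [integral_eq_sub_of_hasDerivAt (f := fun p => exp (p * c) / c)
    (fun p _ => by
      have h := (((hasDerivAt_id p).mul_const c).exp).div_const c
      exact hda h (fun t => by simp only [id_eq]) (by simp only [id_eq]; field_simp))
    (Continuous.intervalIntegrable (by continuity) 0 1)]
  simp only [one_mul, zero_mul, Real.exp_zero]
  field_simp

lemma Ee1_ne {c : ℝ} (hc : c ≠ 0) : Ee1 c = ((c - 1) * exp c + 1) / c ^ 2 := by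
  unfold Ee1
  rw [integral_eq_sub_of_hasDerivAt (f := fun p => (p * c - 1) / c ^ 2 * exp (p * c))
    (fun p _ => by
      have h := ((((hasDerivAt_id p).mul_const c).sub_const 1).div_const (c ^ 2)).mul
        (((hasDerivAt_id p).mul_const c).exp)
      exact hda h (fun t => by simp only [Pi.add_apply, Pi.sub_apply, Pi.mul_apply, Pi.neg_apply, id_eq]) (by simp only [id_eq]; field_simp; ring))
    (Continuous.intervalIntegrable (by continuity) 0 1)]
  simp only [one_mul, zero_mul]
  field_simp
  rw [Real.exp_zero]; ring

lemma hasDerivAt_Ee (c : ℝ) : HasDerivAt Ee (Ee1 c) c := by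
  have := (intervalIntegral.hasDerivAt_integral_of_dominated_loc_of_deriv_le
    (F := fun x t => exp (t * x)) (F' := fun x t => t * exp (t * x)) (x₀ := c)
    (a := (0:ℝ)) (b := 1) (bound := fun _ => exp (|c| + 1)) (μ := MeasureTheory.volume)
    (Metric.ball_mem_nhds c one_pos)
    (Filter.Eventually.of_forall fun x =>
      (Continuous.aestronglyMeasurable (by continuity)))
    (Continuous.intervalIntegrable (by continuity) 0 1)
    (Continuous.aestronglyMeasurable (by continuity))
    (Filter.Eventually.of_forall ?_)
    (Continuous.intervalIntegrable (by continuity) 0 1)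
    (Filter.Eventually.of_forall ?_)).2
  · exact this
  · intro t ht x hx
    rw [Set.uIoc_of_le (by norm_num : (0:ℝ) ≤ 1)] at ht
    have ht0 : 0 ≤ t := le_of_lt ht.1
    have ht1 : t ≤ 1 := ht.2
    have hxc : |x| ≤ |c| + 1 := by
      have := abs_sub_abs_le_abs_sub x c
      have hd : |x - c| < 1 := by simpa [Metric.mem_ball, Real.dist_eq] using hx
      linarith
    have : ‖t * exp (t * x)‖ = t * exp (t * x) := by
      rw [Real.norm_eq_abs, abs_of_nonneg (mul_nonneg ht0 (exp_nonneg _))]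
    rw [this]
    calc t * exp (t * x) ≤ 1 * exp (t * x) :=
          mul_le_mul_of_nonneg_right ht1 (exp_nonneg _)
      _ = exp (t * x) := one_mul _
      _ ≤ exp (|c| + 1) := by
          apply Real.exp_le_exp.2
          calc t * x ≤ |t * x| := le_abs_self _
            _ = t * |x| := by rw [abs_mul, abs_of_nonneg ht0]
            _ ≤ 1 * (|c| + 1) := by
                apply mul_le_mul ht1 hxc (abs_nonneg x) zero_le_one
            _ = |c| + 1 := one_mul _
  · intro t _ x _
    have h := (hasDerivAt_id x).const_mul t |>.exp
    exact hda h (fun u => by simp only [id_eq]) (by simp only [id_eq]; ring)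

noncomputable def thetaLog (r s : ℝ) : ℝ := ∫ p in (0:ℝ)..1, r ^ (1 - p) * s ^ p

noncomputable def dtheta1 (r s : ℝ) : ℝ := deriv (fun u : ℝ => thetaLog u s) r

noncomputable def dtheta2 (r s : ℝ) : ℝ := deriv (fun v : ℝ => thetaLog r v) s

lemma thetaLog_eq {r s : ℝ} (hr : 0 < r) (hs : 0 < s) :
    thetaLog r s = r * Ee (log s - log r) := by
  unfold thetaLog Ee
  rw [← intervalIntegral.integral_const_mul]
  apply intervalIntegral.integral_congr
  intro p _
  show r ^ (1 - p) * s ^ p = r * exp (p * (log s - log r))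
  rw [Real.rpow_def_of_pos hr, Real.rpow_def_of_pos hs, ← Real.exp_add]
  nth_rewrite 2 [← Real.exp_log hr]
  rw [← Real.exp_add]
  congr 1
  ring

lemma dtheta1_eq {r s : ℝ} (hr : 0 < r) (hs : 0 < s) :
    dtheta1 r s = Ee (log s - log r) - Ee1 (log s - log r) := by
  have hloc : (fun u => thetaLog u s) =ᶠ[nhds r] (fun u => u * Ee (log s - log u)) := by
    filter_upwards [isOpen_Ioi.mem_nhds hr] with u hu using thetaLog_eq hu hs
  have hd : HasDerivAt (fun u => u * Ee (log s - log u))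
      (Ee (log s - log r) - Ee1 (log s - log r)) r := by
    have hlog : HasDerivAt (fun u : ℝ => log s - log u) (-r⁻¹) r := by
      simpa using (Real.hasDerivAt_log (ne_of_gt hr)).const_sub (log s)
    have hE : HasDerivAt (fun u => Ee (log s - log u)) (Ee1 (log s - log r) * -r⁻¹) r :=
      HasDerivAt.comp (h₂ := Ee) r (hasDerivAt_Ee (log s - log r)) hlog
    have h := (hasDerivAt_id r).mul hE
    refine hda h (fun t => by simp only [Pi.mul_apply, id_eq]) ?_
    simp only [id_eq]
    field_simp
    ring
  unfold dtheta1
  rw [hloc.deriv_eq]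
  exact hd.deriv

lemma dtheta2_eq {r s : ℝ} (hr : 0 < r) (hs : 0 < s) :
    dtheta2 r s = r / s * Ee1 (log s - log r) := by
  have hloc : (fun v => thetaLog r v) =ᶠ[nhds s] (fun v => r * Ee (log v - log r)) := by
    filter_upwards [isOpen_Ioi.mem_nhds hs] with v hv using thetaLog_eq hr hv
  have hd : HasDerivAt (fun v => r * Ee (log v - log r))
      (r / s * Ee1 (log s - log r)) s := by
    have hlog : HasDerivAt (fun v : ℝ => log v - log r) s⁻¹ s := by
      simpa using (Real.hasDerivAt_log (ne_of_gt hs)).sub_const (log r)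
    have hE : HasDerivAt (fun v => Ee (log v - log r)) (Ee1 (log s - log r) * s⁻¹) s :=
      HasDerivAt.comp (h₂ := Ee) s (hasDerivAt_Ee (log s - log r)) hlog
    have h := hE.const_mul r
    refine hda h (fun t => rfl) ?_
    field_simp
    try ring
  unfold dtheta2
  rw [hloc.deriv_eq]
  exact hd.deriv

noncomputable def bfun (a b c : ℝ) : ℝ := dtheta1 b c * a + dtheta2 b c * b - thetaLog a b

noncomputable def b0fun (a b c : ℝ) : ℝ := dtheta1 b c * a + dtheta2 b c * b

theorem bfun_symm_and_lower (a b : ℝ) (ha : 0 < a) (hb : 0 < b) :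
    bfun a b a = bfun b a b ∧ 4 * thetaLog a b + bfun a b a ≥ 2 * (a + b) := by
  have hmc : log b - log a = -(log a - log b) := by ring
  have h1 : thetaLog a b = a * Ee (-(log a - log b)) := by
    rw [thetaLog_eq ha hb, hmc]
  have h6 : thetaLog b a = b * Ee (log a - log b) := thetaLog_eq hb ha
  have h2 : dtheta1 b a = Ee (log a - log b) - Ee1 (log a - log b) := dtheta1_eq hb ha
  have h3 : dtheta2 b a = b / a * Ee1 (log a - log b) := dtheta2_eq hb ha
  have h4 : dtheta1 a b = Ee (-(log a - log b)) - Ee1 (-(log a - log b)) := by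
    rw [dtheta1_eq ha hb, hmc]
  have h5 : dtheta2 a b = a / b * Ee1 (-(log a - log b)) := by
    rw [dtheta2_eq ha hb, hmc]
  have hX : exp (log a - log b) * b = a := by
    rw [Real.exp_sub, Real.exp_log ha, Real.exp_log hb]
    field_simp
  unfold bfun
  rw [h1, h2, h3, h4, h5, h6]
  generalize hgen : log a - log b = c at hX
  clear h1 h2 h3 h4 h5 h6 hmc hgen
  rcases eq_or_ne c 0 with hc | hc
  · subst hc
    rw [Real.exp_zero, one_mul] at hX
    subst hX
    rw [neg_zero, Ee_zero, Ee1_zero, div_self (ne_of_gt hb)]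
    constructor
    · ring
    · nlinarith
  · have hc2 : (-c) ≠ 0 := neg_ne_zero.2 hc
    have hXpos : (0:ℝ) < exp c := exp_pos _
    have haX : a = exp c * b := hX.symm
    rw [Ee_ne hc, Ee1_ne hc, Ee_ne hc2, Ee1_ne hc2, Real.exp_neg]
    subst haX
    constructor
    · field_simp
      ring
    · have hg := gg0_nonneg c
      unfold gg0 at hg
      rw [Real.exp_neg] at hg
      rw [ge_iff_le, ← sub_nonneg]
      have key : 4 * (rexp c * b * (((rexp c)⁻¹ - 1) / -c)) +
            (((rexp c - 1) / c - ((c - 1) * rexp c + 1) / c ^ 2) * (rexp c * b) +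
              b / (rexp c * b) * (((c - 1) * rexp c + 1) / c ^ 2) * b -
              rexp c * b * (((rexp c)⁻¹ - 1) / -c)) - 2 * (rexp c * b + b)
          = b * (rexp c ^ 2 - (2*c^2-2*c+1) * rexp c - (2*c^2+2*c+1) + (rexp c)⁻¹) / c ^ 2 := by
        field_simp
        ring
      have h2 : 0 ≤ b * (rexp c ^ 2 - (2*c^2-2*c+1) * rexp c - (2*c^2+2*c+1) + (rexp c)⁻¹) / c ^ 2 :=
        div_nonneg (mul_nonneg hb.le hg) (sq_nonneg c)
      linarith [key, h2]
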